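/- Let n be a positive integer, let ρ > 0 and τ > 0 be real numbers, and let σ₁, …, σₙ ≥ 0 be nonnegative reals with Σ the corresponding diagonal matrix. Then the infimum over all pairs (Γ, W), where Γ is an n×n diagonal matrix with nonnegative entries γ₁, …, γₙ and W is an n×n orthogonal matrix, of (ρ/2)·‖Σ − W Γ² Wᵀ‖_F² + τ·trace(Γ) equals Σᵢ₌₁ⁿ min_{γ ≥ 0} [ (ρ/2)·(σᵢ − γ²)² + τ·γ ], provided σ₁ ≥ σ₂ ≥ … ≥ σₙ. -/

import Mathlib

open Matrix BigOperators Finset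

noncomputable def frobNormSq {m n : ℕ} (M : Matrix (Fin m) (Fin n) ℝ) : ℝ :=
  ∑ i, ∑ j, (M i j)^2

noncomputable def singularValues {m n : ℕ} (M : Matrix (Fin m) (Fin n) ℝ) : Fin n → ℝ :=
  fun i => Real.sqrt ((show (Mᵀ * M).IsHermitian by
    simpa [Matrix.conjTranspose_eq_transpose_of_trivial] using
      Matrix.isHermitian_conjTranspose_mul_self M).eigenvalues i)

noncomputable def nuclearNorm {m n : ℕ} (M : Matrix (Fin m) (Fin n) ℝ) : ℝ :=
  ∑ i, singularValues M i

/- Auxiliary development -/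

noncomputable def Gfun (ρ τ s : ℝ) : ℝ :=
  sInf ((fun γ : ℝ => ρ / 2 * (s - γ ^ 2) ^ 2 + τ * γ) '' Set.Ici 0)

lemma bdd_img (ρ τ s : ℝ) (hρ : 0 < ρ) (hτ : 0 < τ) :
    BddBelow ((fun γ : ℝ => ρ / 2 * (s - γ ^ 2) ^ 2 + τ * γ) '' Set.Ici 0) := by
  refine ⟨0, ?_⟩
  rintro x ⟨γ, hγ, rfl⟩
  have : (0:ℝ) ≤ γ := hγ
  positivity

lemma G_le (ρ τ s : ℝ) (hρ : 0 < ρ) (hτ : 0 < τ) {γ : ℝ} (hγ : 0 ≤ γ) :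
    Gfun ρ τ s ≤ ρ / 2 * (s - γ ^ 2) ^ 2 + τ * γ :=
  csInf_le (bdd_img ρ τ s hρ hτ) ⟨γ, hγ, rfl⟩

lemma G_attained (ρ τ : ℝ) (hρ : 0 < ρ) (hτ : 0 < τ) (s : ℝ) :
    ∃ γ₀, 0 ≤ γ₀ ∧ Gfun ρ τ s = ρ / 2 * (s - γ₀ ^ 2) ^ 2 + τ * γ₀ := by
  set f : ℝ → ℝ := fun γ => ρ / 2 * (s - γ ^ 2) ^ 2 + τ * γ with hf
  have hcont : Continuous f := by fun_prop
  set B : ℝ := ρ / 2 * s ^ 2 / τ with hB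
  have hB0 : 0 ≤ B := by positivity
  obtain ⟨γ₀, hγ₀mem, hmin⟩ :=
    (isCompact_Icc (a := (0:ℝ)) (b := B)).exists_isMinOn ⟨0, by simp [hB0]⟩
      hcont.continuousOn
  have key : ∀ γ, 0 ≤ γ → f γ₀ ≤ f γ := by
    intro γ hγ
    by_cases h : γ ≤ B
    · exact hmin ⟨hγ, h⟩
    · push_neg at h
      have h1 : f γ₀ ≤ f 0 := hmin ⟨le_refl _, hB0⟩
      have h2 : f 0 = ρ / 2 * s ^ 2 := by simp [hf]
      clear_value f B
      have h3 : ρ / 2 * s ^ 2 = τ * B := by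
        field_simp [hB]; rw [hB]; field_simp
      have h4 : τ * B ≤ τ * γ := by nlinarith
      have h5 : τ * γ ≤ f γ := by
        have : (0:ℝ) ≤ ρ / 2 * (s - γ ^ 2) ^ 2 := by positivity
        simp [hf]; linarith
      show f γ₀ ≤ f γ; linarith
  refine ⟨γ₀, hγ₀mem.1, le_antisymm (G_le ρ τ s hρ hτ hγ₀mem.1) ?_⟩
  refine le_csInf ⟨f 0, 0, Set.self_mem_Ici, rfl⟩ ?_
  rintro x ⟨γ, hγ, rfl⟩
  exact key γ hγ

lemma jensen {n : ℕ} (ρ τ : ℝ) (hρ : 0 < ρ) (hτ : 0 < τ) (σ : Fin n → ℝ)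
    (w : Fin n → ℝ) (hw0 : ∀ i, 0 ≤ w i) (hw1 : ∑ i, w i = 1) (s : ℝ)
    (hs : s = ∑ i, w i * σ i) :
    ∑ i, w i * (Gfun ρ τ (σ i) - ρ / 2 * (σ i) ^ 2) + ρ / 2 * s ^ 2 ≤ Gfun ρ τ s := by
  refine le_csInf ⟨ρ / 2 * (s - 0 ^ 2) ^ 2 + τ * 0, 0, Set.self_mem_Ici, rfl⟩ ?_
  rintro x ⟨γ, hγ, rfl⟩
  have hγ' : (0:ℝ) ≤ γ := hγ
  have step1 : ∑ i, w i * (Gfun ρ τ (σ i) - ρ / 2 * (σ i) ^ 2) ≤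
      ∑ i, w i * (ρ / 2 * (σ i - γ ^ 2) ^ 2 + τ * γ - ρ / 2 * (σ i) ^ 2) := by
    refine Finset.sum_le_sum fun i _ => mul_le_mul_of_nonneg_left ?_ (hw0 i)
    have := G_le ρ τ (σ i) hρ hτ hγ'
    linarith
  have step2 : ∑ i, w i * (ρ / 2 * (σ i - γ ^ 2) ^ 2 + τ * γ - ρ / 2 * (σ i) ^ 2)
      = (ρ / 2 * γ ^ 4 + τ * γ) * (∑ i, w i) - ρ * γ ^ 2 * (∑ i, w i * σ i) := by
    rw [Finset.mul_sum, Finset.mul_sum, ← Finset.sum_sub_distrib]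
    refine Finset.sum_congr rfl fun i _ => by ring
  rw [step2, hw1, ← hs] at step1
  nlinarith [step1]

lemma frob_trace {n : ℕ} (M : Matrix (Fin n) (Fin n) ℝ) :
    frobNormSq M = (Mᵀ * M).trace := by
  simp only [frobNormSq, Matrix.trace, Matrix.diag, Matrix.mul_apply,
    Matrix.transpose_apply, sq]
  exact Finset.sum_comm

lemma frob_expand {n : ℕ} (σ d : Fin n → ℝ) (W : Matrix (Fin n) (Fin n) ℝ)
    (hW : Wᵀ * W = 1) :
    frobNormSq (Matrix.diagonal σ - W * Matrix.diagonal d * Wᵀ) =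
      ∑ i, (σ i)^2 - 2 * ∑ k, (∑ i, (W i k)^2 * σ i) * d k + ∑ k, (d k)^2 := by
  rw [frob_trace]
  set A : Matrix (Fin n) (Fin n) ℝ := W * Matrix.diagonal d * Wᵀ with hA
  have hAT : Aᵀ = A := by
    simp [hA, Matrix.transpose_mul, Matrix.diagonal_transpose, Matrix.mul_assoc]
  have hMT : (Matrix.diagonal σ - A)ᵀ = Matrix.diagonal σ - A := by
    rw [Matrix.transpose_sub, hAT, Matrix.diagonal_transpose]
  rw [hMT, Matrix.sub_mul, Matrix.mul_sub, Matrix.mul_sub]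
  rw [Matrix.trace_sub, Matrix.trace_sub, Matrix.trace_sub]
  have hAii : ∀ i, A i i = ∑ k, (W i k)^2 * d k := by
    intro i
    rw [hA, Matrix.mul_apply]
    refine Finset.sum_congr rfl fun k _ => ?_
    rw [Matrix.mul_diagonal, Matrix.transpose_apply]; ring
  have t1 : (Matrix.diagonal σ * Matrix.diagonal σ).trace = ∑ i, (σ i)^2 := by
    rw [Matrix.diagonal_mul_diagonal, Matrix.trace_diagonal]
    exact Finset.sum_congr rfl fun i _ => (sq (σ i)).symm
  have t2 : (Matrix.diagonal σ * A).trace = ∑ k, (∑ i, (W i k)^2 * σ i) * d k := by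
    simp only [Matrix.trace, Matrix.diag, Matrix.diagonal_mul]
    simp only [hAii, Finset.mul_sum]
    rw [Finset.sum_comm]
    refine Finset.sum_congr rfl fun k _ => ?_
    rw [Finset.sum_mul]
    exact Finset.sum_congr rfl fun i _ => by ring
  have t3 : (A * Matrix.diagonal σ).trace = ∑ k, (∑ i, (W i k)^2 * σ i) * d k := by
    rw [Matrix.trace_mul_comm]; exact t2
  have t4 : (A * A).trace = ∑ k, (d k)^2 := by
    have e1 : A * A = W * Matrix.diagonal (fun k => d k * d k) * Wᵀ := by
      rw [hA]
      calc W * Matrix.diagonal d * Wᵀ * (W * Matrix.diagonal d * Wᵀ)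
          = W * Matrix.diagonal d * (Wᵀ * W) * Matrix.diagonal d * Wᵀ := by
            simp only [Matrix.mul_assoc]
        _ = W * (Matrix.diagonal d * Matrix.diagonal d) * Wᵀ := by
            rw [hW, Matrix.mul_one]; simp only [Matrix.mul_assoc]
        _ = W * Matrix.diagonal (fun k => d k * d k) * Wᵀ := by
            rw [Matrix.diagonal_mul_diagonal]
    rw [e1, Matrix.trace_mul_comm, ← Matrix.mul_assoc, hW, Matrix.one_mul,
      Matrix.trace_diagonal]
    exact Finset.sum_congr rfl fun k _ => (sq (d k)).symm
  rw [t1, t2, t3, t4]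
  ring

/-- For nonincreasing σᵢ ≥ 0 with Σ = diag(σ), the infimum over pairs
(Γ, W), Γ diagonal nonnegative, W orthogonal, of (ρ/2)·‖Σ − WΓ²Wᵀ‖_F² + τ·trace(Γ)
equals ∑ᵢ min_{γ ≥ 0} [(ρ/2)·(σᵢ − γ²)² + τ·γ]. -/
theorem stmt_14 (n : ℕ) (hn : 0 < n) (ρ τ : ℝ) (hρ : 0 < ρ) (hτ : 0 < τ)
    (σ : Fin n → ℝ) (hσ0 : ∀ i, 0 ≤ σ i) (hσ : Antitone σ) :
    sInf {v : ℝ | ∃ γ : Fin n → ℝ, ∃ W : Matrix (Fin n) (Fin n) ℝ,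
        (∀ i, 0 ≤ γ i) ∧ Wᵀ * W = 1 ∧
        v = ρ / 2 * frobNormSq (Matrix.diagonal σ -
              W * Matrix.diagonal (fun i => γ i ^ 2) * Wᵀ) +
            τ * Matrix.trace (Matrix.diagonal γ)} =
      ∑ i, sInf ((fun γ : ℝ =>
        ρ / 2 * (σ i - γ ^ 2) ^ 2 + τ * γ) '' Set.Ici 0) := by
  classical
  have hRHS : (∑ i, sInf ((fun γ : ℝ =>
      ρ / 2 * (σ i - γ ^ 2) ^ 2 + τ * γ) '' Set.Ici 0)) = ∑ i, Gfun ρ τ (σ i) := rfl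
  rw [hRHS]
  -- the witness: W = 1 and per-coordinate minimizers
  choose g hg0 hgval using fun i => G_attained ρ τ hρ hτ (σ i)
  have hone : ((1 : Matrix (Fin n) (Fin n) ℝ)ᵀ * 1) = 1 := by simp
  have honecol : ∀ k, ∑ i, (((1 : Matrix (Fin n) (Fin n) ℝ)) i k)^2 * σ i = σ k := by
    intro k
    rw [Finset.sum_eq_single k]
    · simp [Matrix.one_apply]
    · intro i _ hik
      simp [Matrix.one_apply, hik]
    · intro h
      exact absurd (Finset.mem_univ k) h
  have hmem : (∑ i, Gfun ρ τ (σ i)) ∈ {v : ℝ | ∃ γ : Fin n → ℝ,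
      ∃ W : Matrix (Fin n) (Fin n) ℝ,
      (∀ i, 0 ≤ γ i) ∧ Wᵀ * W = 1 ∧
      v = ρ / 2 * frobNormSq (Matrix.diagonal σ -
            W * Matrix.diagonal (fun i => γ i ^ 2) * Wᵀ) +
          τ * Matrix.trace (Matrix.diagonal γ)} := by
    refine ⟨g, 1, hg0, hone, ?_⟩
    rw [frob_expand σ (fun i => g i ^ 2) 1 hone, Matrix.trace_diagonal]
    simp only [honecol]
    have h : ∑ i, Gfun ρ τ (σ i)
        = ∑ i, (ρ / 2 * (σ i - g i ^ 2) ^ 2 + τ * g i) :=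
      Finset.sum_congr rfl fun i _ => hgval i
    rw [h]
    have h2 : ∑ i, (ρ / 2 * (σ i - g i ^ 2) ^ 2 + τ * g i)
        = ∑ i, (ρ / 2 * (σ i)^2) - ∑ i, (ρ * (σ i * g i ^ 2))
          + ∑ i, (ρ / 2 * ((g i ^ 2))^2) + ∑ i, (τ * g i) := by
      rw [← Finset.sum_sub_distrib, ← Finset.sum_add_distrib, ← Finset.sum_add_distrib]
      exact Finset.sum_congr rfl fun i _ => by ring
    rw [h2]
    simp only [← Finset.mul_sum]
    ring
  apply le_antisymm
  · refine csInf_le ⟨0, ?_⟩ hmem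
    rintro v ⟨γ, W, hγ, hW, rfl⟩
    have h1 : 0 ≤ frobNormSq (Matrix.diagonal σ -
        W * Matrix.diagonal (fun i => γ i ^ 2) * Wᵀ) := by
      refine Finset.sum_nonneg fun i _ => Finset.sum_nonneg fun j _ => sq_nonneg _
    have h2 : 0 ≤ Matrix.trace (Matrix.diagonal γ) := by
      rw [Matrix.trace_diagonal]
      exact Finset.sum_nonneg fun i _ => hγ i
    positivity
  · refine le_csInf ⟨_, hmem⟩ ?_
    rintro v ⟨γ, W, hγ, hW, rfl⟩
    have hWW : W * Wᵀ = 1 := mul_eq_one_comm.mp hW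
    have hcol : ∀ k, ∑ i, (W i k)^2 = 1 := by
      intro k
      have h := congrFun (congrFun hW k) k
      simpa [Matrix.mul_apply, Matrix.one_apply, sq] using h
    have hrow : ∀ i, ∑ k, (W i k)^2 = 1 := by
      intro i
      have h := congrFun (congrFun hWW i) i
      simpa [Matrix.mul_apply, Matrix.one_apply, sq] using h
    set sc : Fin n → ℝ := fun k => ∑ i, (W i k)^2 * σ i with hsc
    have hfrob := frob_expand σ (fun i => γ i ^ 2) W hW
    have hk : ∀ k, Gfun ρ τ (sc k) - ρ / 2 * (sc k)^2
        ≤ ρ / 2 * ((γ k ^ 2))^2 - ρ * sc k * (γ k ^ 2) + τ * γ k := by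
      intro k
      have h1 := G_le ρ τ (sc k) hρ hτ (hγ k)
      nlinarith [h1]
    have hjen : ∀ k, ∑ i, (W i k)^2 * (Gfun ρ τ (σ i) - ρ / 2 * (σ i) ^ 2)
        + ρ / 2 * (sc k)^2 ≤ Gfun ρ τ (sc k) := fun k =>
      jensen ρ τ hρ hτ σ (fun i => (W i k)^2) (fun i => sq_nonneg _) (hcol k) (sc k) rfl
    have hcomb : ∀ k, ∑ i, (W i k)^2 * (Gfun ρ τ (σ i) - ρ / 2 * (σ i) ^ 2)
        ≤ ρ / 2 * ((γ k ^ 2))^2 - ρ * sc k * (γ k ^ 2) + τ * γ k := by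
      intro k; linarith [hk k, hjen k]
    have hsum : ∑ i, (Gfun ρ τ (σ i) - ρ / 2 * (σ i) ^ 2)
        ≤ ∑ k, (ρ / 2 * ((γ k ^ 2))^2 - ρ * sc k * (γ k ^ 2) + τ * γ k) := by
      calc ∑ i, (Gfun ρ τ (σ i) - ρ / 2 * (σ i) ^ 2)
          = ∑ i, (∑ k, (W i k)^2) * (Gfun ρ τ (σ i) - ρ / 2 * (σ i) ^ 2) := by
            refine Finset.sum_congr rfl fun i _ => ?_
            rw [hrow i, one_mul]
        _ = ∑ i, ∑ k, (W i k)^2 * (Gfun ρ τ (σ i) - ρ / 2 * (σ i) ^ 2) := by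
            refine Finset.sum_congr rfl fun i _ => Finset.sum_mul _ _ _
        _ = ∑ k, ∑ i, (W i k)^2 * (Gfun ρ τ (σ i) - ρ / 2 * (σ i) ^ 2) :=
            Finset.sum_comm
        _ ≤ _ := Finset.sum_le_sum fun k _ => hcomb k
    have e1 : ∑ i, (Gfun ρ τ (σ i) - ρ / 2 * (σ i) ^ 2)
        = ∑ i, Gfun ρ τ (σ i) - ρ / 2 * ∑ i, (σ i) ^ 2 := by
      rw [Finset.sum_sub_distrib, Finset.mul_sum]
    have e2 : ∑ k, (ρ / 2 * ((γ k ^ 2))^2 - ρ * sc k * (γ k ^ 2) + τ * γ k)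
        = ρ / 2 * ∑ k, ((γ k ^ 2))^2 - ρ * ∑ k, sc k * (γ k ^ 2) + τ * ∑ k, γ k := by
      rw [Finset.mul_sum, Finset.mul_sum, Finset.mul_sum, ← Finset.sum_sub_distrib,
        ← Finset.sum_add_distrib]
      exact Finset.sum_congr rfl fun k _ => by ring
    rw [e1, e2] at hsum
    rw [hfrob, Matrix.trace_diagonal]
    have hscdef : ∀ k, (∑ i, (W i k)^2 * σ i) = sc k := fun k => rfl
    simp only [hscdef]
    linarith [hsum]
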